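/- For k ∈ ℕ, if there is a DMTS-linear k-switching relation family from χ(I₁) to χ(I₂) for LTS I₁, I₂, then its R₁-components form an LTS-linear k-switching relation family from I₁ to I₂, and its R₂-components form one from I₂ to I₁; consequently χ(I₁) ⊑ₖ χ(I₂) implies I₁ ≈ₖ I₂. -/

import Mathlib

/-- A labeled transition system over a finite alphabet `A`:
finitely many states, an initial state, and labeled transitions. -/
structure LTS (A : Type) [Fintype A] where
  St : Type
  fin : Fintype St
  init : St
  tr : St → A → St → Prop

/-- A disjunctive modal transition system over a finite alphabet `A`. -/
structure DMTS (A : Type) [Fintype A] where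
  St : Type
  fin : Fintype St
  init : Set St
  may : St → A → St → Prop
  must : St → Set (A × St) → Prop
  consistent : ∀ s N, must s N → ∀ a t, (a, t) ∈ N → may s a t

variable {A : Type} [Fintype A]

/-- `R` is a modal refinement of `D₁` into `D₂`. -/
def IsModalRefinement (D₁ D₂ : DMTS A) (R : D₁.St → D₂.St → Prop) : Prop :=
  (∀ s₁ ∈ D₁.init, ∃ s₂ ∈ D₂.init, R s₁ s₂) ∧
  ∀ s₁ s₂, R s₁ s₂ →
    (∀ a t₁, D₁.may s₁ a t₁ → ∃ t₂, D₂.may s₂ a t₂ ∧ R t₁ t₂) ∧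
    (∀ N₂, D₂.must s₂ N₂ → ∃ N₁, D₁.must s₁ N₁ ∧
      ∀ a t₁, (a, t₁) ∈ N₁ → ∃ t₂, (a, t₂) ∈ N₂ ∧ R t₁ t₂)

/-- Modal refinement `D₁ ≤ D₂`. -/
def dmtsLe (D₁ D₂ : DMTS A) : Prop := ∃ R, IsModalRefinement D₁ D₂ R

/-- The standard embedding of LTS into DMTS. -/
def chi (I : LTS A) : DMTS A where
  St := I.St
  fin := I.fin
  init := {I.init}
  may := I.tr
  must := fun s N => ∃ a t, I.tr s a t ∧ N = {(a, t)}
  consistent := by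
    rintro s N ⟨a, t, htr, rfl⟩ a' t' ht'
    simp only [Set.mem_singleton_iff, Prod.mk.injEq] at ht'
    obtain ⟨rfl, rfl⟩ := ht'
    exact htr

/-- `R` is a bisimulation between the LTS `I₁` and `I₂`. -/
def IsBisimulation (I₁ I₂ : LTS A) (R : I₁.St → I₂.St → Prop) : Prop :=
  R I₁.init I₂.init ∧
  ∀ s₁ s₂, R s₁ s₂ →
    (∀ a t₁, I₁.tr s₁ a t₁ → ∃ t₂, I₂.tr s₂ a t₂ ∧ R t₁ t₂) ∧
    (∀ a t₂, I₂.tr s₂ a t₂ → ∃ t₁, I₁.tr s₁ a t₁ ∧ R t₁ t₂)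

/-- `I₁` and `I₂` are bisimilar. -/
def Bisimilar (I₁ I₂ : LTS A) : Prop := ∃ R, IsBisimulation I₁ I₂ R

/-- `R` is a simulation of LTS `I₁` into `I₂`. -/
def IsSimulation (I₁ I₂ : LTS A) (R : I₁.St → I₂.St → Prop) : Prop :=
  R I₁.init I₂.init ∧
  ∀ s₁ s₂, R s₁ s₂ → ∀ a t₁, I₁.tr s₁ a t₁ → ∃ t₂, I₂.tr s₂ a t₂ ∧ R t₁ t₂

/-- `(R₁, R₂)` is a simulation refinement of `D₁` into `D₂`. -/
def IsSimRefinement (D₁ D₂ : DMTS A) (R₁ R₂ : D₁.St → D₂.St → Prop) : Prop :=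
  (∀ s₁ ∈ D₁.init, ∃ s₂ ∈ D₂.init, R₁ s₁ s₂) ∧
  (∀ s₂ ∈ D₂.init, ∃ s₁ ∈ D₁.init, R₂ s₁ s₂) ∧
  (∀ s₁ s₂, R₁ s₁ s₂ → ∀ a t₁, D₁.may s₁ a t₁ → ∃ t₂, D₂.may s₂ a t₂ ∧ R₁ t₁ t₂) ∧
  (∀ s₁ s₂, R₂ s₁ s₂ → ∀ N₂, D₂.must s₂ N₂ → ∃ N₁, D₁.must s₁ N₁ ∧
    ∀ a t₁, (a, t₁) ∈ N₁ → ∃ t₂, (a, t₂) ∈ N₂ ∧ R₂ t₁ t₂)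

/-- Simulation refinement `D₁ ≲ D₂`. -/
def dmtsSimLe (D₁ D₂ : DMTS A) : Prop := ∃ R₁ R₂, IsSimRefinement D₁ D₂ R₁ R₂

/-- The reflexive-transitive closure `T*` of the transition relation of an LTS,
labeled by words. -/
inductive LStar (I : LTS A) : I.St → List A → I.St → Prop
  | refl (s : I.St) : LStar I s [] s
  | step {s : I.St} {τ : List A} {t : I.St} {a : A} {u : I.St} :
      LStar I s τ t → I.tr t a u → LStar I s (τ ++ [a]) u

/-- A linear `k`-switching relation family `R⁰, …, Rᵏ` from LTS `I₁` to `I₂`. -/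
def IsLinearFamily (I₁ I₂ : LTS A) (k : ℕ) (R : ℕ → I₁.St → I₂.St → Prop) : Prop :=
  R 0 I₁.init I₂.init ∧
  ∀ j, j ≤ k → ∀ s₁ s₂, R j s₁ s₂ →
    (Even j →
      (∀ τ t₁, LStar I₁ s₁ τ t₁ → ∃ t₂, LStar I₂ s₂ τ t₂) ∧
      (j < k → ∀ τ t₁, LStar I₁ s₁ τ t₁ → ∃ t₂, LStar I₂ s₂ τ t₂ ∧ R (j + 1) t₁ t₂)) ∧
    (Odd j →
      (∀ τ t₂, LStar I₂ s₂ τ t₂ → ∃ t₁, LStar I₁ s₁ τ t₁) ∧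
      (j < k → ∀ τ t₂, LStar I₂ s₂ τ t₂ → ∃ t₁, LStar I₁ s₁ τ t₁ ∧ R (j + 1) t₁ t₂))

/-- `I₁ ≈ₖ I₂`: linear `k`-switching relation families exist in both directions. -/
def approxK (k : ℕ) (I₁ I₂ : LTS A) : Prop :=
  (∃ R, IsLinearFamily I₁ I₂ k R) ∧ (∃ R, IsLinearFamily I₂ I₁ k R)

/-- The word-labeled iterated may-transition relation `s ⇢*τ t` of a DMTS. -/
inductive StarMay (D : DMTS A) : D.St → List A → D.St → Prop
  | refl (s : D.St) : StarMay D s [] s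
  | step {s : D.St} {τ : List A} {t : D.St} {a : A} {u : D.St} :
      StarMay D s τ t → D.may t a u → StarMay D s (τ ++ [a]) u

/-- The word-labeled iterated must-transition relation `s ⟶*τ t` of a DMTS. -/
inductive StarMust (D : DMTS A) : D.St → List A → D.St → Prop
  | refl (s : D.St) : StarMust D s [] s
  | step {s : D.St} {τ : List A} {t : D.St} {N : Set (A × D.St)} {a : A} {u : D.St} :
      StarMust D s τ t → D.must t N → (a, u) ∈ N → StarMust D s (τ ++ [a]) u

/-- A linear `k`-switching relation family `R₁⁰,…,R₁ᵏ, R₂⁰,…,R₂ᵏ` from DMTS `D₁` to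
`D₂`. -/
def IsDMTSLinearFamily (D₁ D₂ : DMTS A) (k : ℕ)
    (R₁ R₂ : ℕ → D₁.St → D₂.St → Prop) : Prop :=
  (∀ s₁ ∈ D₁.init, ∃ s₂ ∈ D₂.init, R₁ 0 s₁ s₂) ∧
  (∀ s₂ ∈ D₂.init, ∃ s₁ ∈ D₁.init, R₂ 0 s₁ s₂) ∧
  (∀ j, j ≤ k → ∀ s₁ s₂, R₁ j s₁ s₂ →
    (Even j →
      (∀ τ t₁, StarMay D₁ s₁ τ t₁ → ∃ t₂, StarMay D₂ s₂ τ t₂) ∧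
      (j < k → ∀ τ t₁, StarMay D₁ s₁ τ t₁ → ∃ t₂, StarMay D₂ s₂ τ t₂ ∧ R₁ (j + 1) t₁ t₂)) ∧
    (Odd j →
      (∀ τ t₂, StarMust D₂ s₂ τ t₂ → ∃ t₁, StarMust D₁ s₁ τ t₁) ∧
      (j < k → ∀ τ t₂, StarMust D₂ s₂ τ t₂ → ∃ t₁, StarMust D₁ s₁ τ t₁ ∧ R₁ (j + 1) t₁ t₂))) ∧
  (∀ j, j ≤ k → ∀ s₁ s₂, R₂ j s₁ s₂ →
    (Even j →
      (∀ τ t₂, StarMust D₂ s₂ τ t₂ → ∃ t₁, StarMust D₁ s₁ τ t₁) ∧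
      (j < k → ∀ τ t₂, StarMust D₂ s₂ τ t₂ → ∃ t₁, StarMust D₁ s₁ τ t₁ ∧ R₂ (j + 1) t₁ t₂)) ∧
    (Odd j →
      (∀ τ t₁, StarMay D₁ s₁ τ t₁ → ∃ t₂, StarMay D₂ s₂ τ t₂) ∧
      (j < k → ∀ τ t₁, StarMay D₁ s₁ τ t₁ → ∃ t₂, StarMay D₂ s₂ τ t₂ ∧ R₂ (j + 1) t₁ t₂)))


lemma starMay_iff {A : Type} [Fintype A] (I : LTS A) (s : I.St) (τ : List A) (t : I.St) :
    StarMay (chi I) s τ t ↔ LStar I s τ t := by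
  constructor
  · intro h
    exact StarMay.rec (motive := fun (τ : List A) (t : (chi I).St) _ => LStar I s τ t)
      (LStar.refl _) (fun h1 h2 ih => LStar.step ih h2) h
  · intro h
    induction h with
    | refl => exact StarMay.refl _
    | step h1 h2 ih => exact StarMay.step ih h2

lemma starMust_iff {A : Type} [Fintype A] (I : LTS A) (s : I.St) (τ : List A) (t : I.St) :
    StarMust (chi I) s τ t ↔ LStar I s τ t := by
  constructor
  · intro h
    refine StarMust.rec (motive := fun (τ : List A) (t : (chi I).St) _ => LStar I s τ t)
      (LStar.refl _) (fun h1 h2 h3 ih => ?_) h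
    obtain ⟨a', t', htr, rfl⟩ := h2
    cases h3
    exact LStar.step ih htr
  · intro h
    induction h with
    | refl => exact StarMust.refl _
    | step h1 h2 ih =>
      exact StarMust.step (N := {(_, _)}) ih ⟨_, _, h2, rfl⟩ rfl

/-- If there is a DMTS-linear `k`-switching relation family from `χ(I₁)` to `χ(I₂)`,
then its `R₁`-components form an LTS-linear `k`-switching relation family from `I₁`
to `I₂` and its `R₂`-components form one from `I₂` to `I₁`; consequently
`χ(I₁) ⊑ₖ χ(I₂)` implies `I₁ ≈ₖ I₂`. -/
theorem dmts_linear_family_chi (k : ℕ) (I₁ I₂ : LTS A) :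
    (∀ R₁ R₂ : ℕ → I₁.St → I₂.St → Prop,
      IsDMTSLinearFamily (chi I₁) (chi I₂) k R₁ R₂ →
        IsLinearFamily I₁ I₂ k R₁ ∧
        IsLinearFamily I₂ I₁ k (fun j s₂ s₁ => R₂ j s₁ s₂)) ∧
    ((∃ R₁ R₂, IsDMTSLinearFamily (chi I₁) (chi I₂) k R₁ R₂) → approxK k I₁ I₂) := by
  
  have main : ∀ R₁ R₂ : ℕ → I₁.St → I₂.St → Prop,
      IsDMTSLinearFamily (chi I₁) (chi I₂) k R₁ R₂ →
        IsLinearFamily I₁ I₂ k R₁ ∧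
        IsLinearFamily I₂ I₁ k (fun j s₂ s₁ => R₂ j s₁ s₂) := by
    intro R₁ R₂ ⟨hi1, hi2, h1, h2⟩
    constructor
    · constructor
      · obtain ⟨s₂, hs₂, hR⟩ := hi1 I₁.init rfl
        have hs₂ : s₂ = I₂.init := hs₂
        rwa [hs₂] at hR
      · intro j hj s₁ s₂ hR
        obtain ⟨he, ho⟩ := h1 j hj s₁ s₂ hR
        constructor
        · intro hev
          obtain ⟨ha, hb⟩ := he hev
          refine ⟨fun τ t₁ ht => ?_, fun hlt τ t₁ ht => ?_⟩
          · obtain ⟨t₂, ht₂⟩ := ha τ t₁ ((starMay_iff I₁ s₁ τ t₁).2 ht)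
            exact ⟨t₂, (starMay_iff I₂ s₂ τ t₂).1 ht₂⟩
          · obtain ⟨t₂, ht₂, hR'⟩ := hb hlt τ t₁ ((starMay_iff I₁ s₁ τ t₁).2 ht)
            exact ⟨t₂, (starMay_iff I₂ s₂ τ t₂).1 ht₂, hR'⟩
        · intro hod
          obtain ⟨ha, hb⟩ := ho hod
          refine ⟨fun τ t₂ ht => ?_, fun hlt τ t₂ ht => ?_⟩
          · obtain ⟨t₁, ht₁⟩ := ha τ t₂ ((starMust_iff I₂ s₂ τ t₂).2 ht)
            exact ⟨t₁, (starMust_iff I₁ s₁ τ t₁).1 ht₁⟩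
          · obtain ⟨t₁, ht₁, hR'⟩ := hb hlt τ t₂ ((starMust_iff I₂ s₂ τ t₂).2 ht)
            exact ⟨t₁, (starMust_iff I₁ s₁ τ t₁).1 ht₁, hR'⟩
    · constructor
      · obtain ⟨s₁, hs₁, hR⟩ := hi2 I₂.init rfl
        have hs₁ : s₁ = I₁.init := hs₁
        exact hs₁ ▸ hR
      · intro j hj s₂ s₁ hR
        obtain ⟨he, ho⟩ := h2 j hj s₁ s₂ hR
        constructor
        · intro hev
          obtain ⟨ha, hb⟩ := he hev
          refine ⟨fun τ t₂ ht => ?_, fun hlt τ t₂ ht => ?_⟩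
          · obtain ⟨t₁, ht₁⟩ := ha τ t₂ ((starMust_iff I₂ s₂ τ t₂).2 ht)
            exact ⟨t₁, (starMust_iff I₁ s₁ τ t₁).1 ht₁⟩
          · obtain ⟨t₁, ht₁, hR'⟩ := hb hlt τ t₂ ((starMust_iff I₂ s₂ τ t₂).2 ht)
            exact ⟨t₁, (starMust_iff I₁ s₁ τ t₁).1 ht₁, hR'⟩
        · intro hod
          obtain ⟨ha, hb⟩ := ho hod
          refine ⟨fun τ t₁ ht => ?_, fun hlt τ t₁ ht => ?_⟩
          · obtain ⟨t₂, ht₂⟩ := ha τ t₁ ((starMay_iff I₁ s₁ τ t₁).2 ht)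
            exact ⟨t₂, (starMay_iff I₂ s₂ τ t₂).1 ht₂⟩
          · obtain ⟨t₂, ht₂, hR'⟩ := hb hlt τ t₁ ((starMay_iff I₁ s₁ τ t₁).2 ht)
            exact ⟨t₂, (starMay_iff I₂ s₂ τ t₂).1 ht₂, hR'⟩
  refine ⟨main, ?_⟩
  rintro ⟨R₁, R₂, h⟩
  obtain ⟨hA, hB⟩ := main R₁ R₂ h
  exact ⟨⟨R₁, hA⟩, ⟨_, hB⟩⟩
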